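/- Let A₀ be a symmetric n×n real matrix with largest eigenvalue ρ₀, A₁ a symmetric m×m real matrix with constant row sum ρ₁ equal to its largest eigenvalue, and b > 0. Then the largest eigenvalue of the corona block matrix A = [[A₀, b J_{1,m} ⊗ I_n],[b J_{m,1} ⊗ I_n, A₁ ⊗ I_n]] equals (ρ₀ + ρ₁ + √((ρ₀ − ρ₁)² + 4 m b²))/2. -/

import Mathlib

open Matrix Kronecker BigOperators

section Aux

open Pointwise

lemma corona_mem_spectrum_iff_exists {N : Type*} [Fintype N] [DecidableEq N]
    (A : Matrix N N ℝ) (μ : ℝ) :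
    μ ∈ spectrum ℝ A ↔ ∃ v : N → ℝ, v ≠ 0 ∧ A.mulVec v = μ • v := by
  rw [← AlgEquiv.spectrum_eq (Matrix.toLinAlgEquiv' : Matrix N N ℝ ≃ₐ[ℝ] _) A,
    ← Module.End.hasEigenvalue_iff_mem_spectrum, Module.End.hasEigenvalue_iff,
    Submodule.ne_bot_iff]
  have key : ∀ v : N → ℝ,
      (v ∈ Module.End.eigenspace (Matrix.toLinAlgEquiv' A) μ ↔ A.mulVec v = μ • v) := by
    intro v
    rw [Module.End.mem_eigenspace_iff]
    simp only [Matrix.toLinAlgEquiv'_apply, Matrix.toLin'_apply]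
  constructor
  · rintro ⟨v, hv, hv0⟩
    exact ⟨v, hv0, (key v).mp hv⟩
  · rintro ⟨v, hv0, hv⟩
    exact ⟨v, (key v).mpr hv, hv0⟩

lemma corona_sq_le_aux (L R : ℝ) (h2 : L ^ 2 ≤ R ^ 2) (hR : 0 ≤ R) : L ≤ R := by
  nlinarith [sq_nonneg (L - R), sq_nonneg (L + R)]

lemma corona_quad_le {N : Type*} [Fintype N] [DecidableEq N] (A : Matrix N N ℝ) (hA : A.IsSymm)
    (ρ : ℝ) (hρ : ρ ∈ upperBounds (spectrum ℝ A)) (x : N → ℝ) :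
    x ⬝ᵥ A.mulVec x ≤ ρ * (x ⬝ᵥ x) := by
  set M : Matrix N N ℝ := ρ • (1 : Matrix N N ℝ) - A with hM
  have hMh : M.IsHermitian := by
    rw [Matrix.IsHermitian, conjTranspose_eq_transpose_of_trivial]
    simp [hM, Matrix.transpose_smul, hA.eq]
  have hps : M.PosSemidef := by
    refine hMh.posSemidef_iff_eigenvalues_nonneg.mpr fun i => ?_
    have h1 : hMh.eigenvalues i ∈ spectrum ℝ M := hMh.eigenvalues_mem_spectrum_real i
    have h2 : ({ρ} : Set ℝ) - spectrum ℝ A = spectrum ℝ M := by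
      rw [spectrum.singleton_sub_eq]
      simp [hM, Algebra.algebraMap_eq_smul_one]
    rw [← h2] at h1
    obtain ⟨r, hr, μ, hμ, hrμ⟩ := Set.mem_sub.mp h1
    rw [Set.mem_singleton_iff] at hr
    subst hr
    rw [← hrμ]
    exact (show (0:ℝ) ≤ r - μ by linarith [hρ hμ])
  have := hps.dotProduct_mulVec_nonneg x
  simp only [star_trivial, hM, Matrix.sub_mulVec, Matrix.smul_mulVec, Matrix.one_mulVec,
    dotProduct_sub, dotProduct_smul, smul_eq_mul] at this
  linarith

end Aux

/-- The adjacency matrix of the corona product: blocks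
`[[A₀, b·J_{1,m} ⊗ I_n],[b·J_{m,1} ⊗ I_n, A₁ ⊗ I_n]]`. -/
noncomputable def coronaA (n m : ℕ) (A0 : Matrix (Fin n) (Fin n) ℝ)
    (A1 : Matrix (Fin m) (Fin m) ℝ) (b : ℝ) :
    Matrix (Fin n ⊕ Fin m × Fin n) (Fin n ⊕ Fin m × Fin n) ℝ :=
  Matrix.fromBlocks A0
    (Matrix.of fun i p => if p.2 = i then b else 0)
    (Matrix.of fun p i => if p.2 = i then b else 0)
    (A1 ⊗ₖ (1 : Matrix (Fin n) (Fin n) ℝ))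

lemma corona_eigen (n m : ℕ) (A0 : Matrix (Fin n) (Fin n) ℝ)
    (A1 : Matrix (Fin m) (Fin m) ℝ) (b : ℝ) (ρ ρ0 ρ1 : ℝ)
    (v0 : Fin n → ℝ) (hv0 : A0.mulVec v0 = ρ0 • v0)
    (hrow : A1.mulVec (fun _ => 1) = fun _ => ρ1)
    (key : (ρ - ρ0) * (ρ - ρ1) = m * b ^ 2) :
    (coronaA n m A0 A1 b).mulVec
      (Sum.elim (fun i => (m * b) * v0 i) (fun p => (ρ - ρ0) * v0 p.2))
      = ρ • (Sum.elim (fun i => (m * b) * v0 i) (fun p => (ρ - ρ0) * v0 p.2)) := by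
  rw [coronaA, fromBlocks_mulVec]
  simp only [Sum.elim_comp_inl, Sum.elim_comp_inr]
  have h0 : ∀ i, (A0 *ᵥ fun i => (m * b) * v0 i) i = (m*b) * (ρ0 * v0 i) := by
    intro i
    have : (fun i => (m * b) * v0 i) = (m*b) • v0 := by funext k; simp [mul_comm]
    rw [this, Matrix.mulVec_smul, hv0]
    simp [mul_comm, mul_left_comm]
  have hrow' : ∀ j, ∑ j', A1 j j' = ρ1 := by
    intro j
    have := congrFun hrow j
    simpa [Matrix.mulVec, dotProduct] using this
  funext p
  rcases p with i | p
  · simp only [Sum.elim_inl, Pi.add_apply, h0, Pi.smul_apply, smul_eq_mul]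
    have hB : ((Matrix.of fun i (p : Fin m × Fin n) => if p.2 = i then b else 0) *ᵥ
        (fun p : Fin m × Fin n => (ρ - ρ0) * v0 p.2)) i
        = m * (b * ((ρ - ρ0) * v0 i)) := by
      simp only [Matrix.mulVec, dotProduct, Matrix.of_apply]
      rw [← Finset.univ_product_univ, Finset.sum_product]
      simp [Finset.sum_ite_eq', Finset.mul_sum, mul_comm, mul_left_comm]
    rw [hB]
    ring
  · simp only [Sum.elim_inr, Pi.add_apply, Pi.smul_apply, smul_eq_mul]
    have hC : ((Matrix.of fun (p : Fin m × Fin n) (i : Fin n) => if p.2 = i then b else 0) *ᵥ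
        (fun i => (m * b) * v0 i)) p
        = b * ((m*b) * v0 p.2) := by
      simp [Matrix.mulVec, dotProduct, Finset.sum_ite_eq']
    have hD : ((A1 ⊗ₖ (1 : Matrix (Fin n) (Fin n) ℝ)) *ᵥ
        (fun p : Fin m × Fin n => (ρ - ρ0) * v0 p.2)) p
        = ρ1 * ((ρ - ρ0) * v0 p.2) := by
      simp only [Matrix.mulVec, dotProduct,
        Matrix.kroneckerMap_apply, Matrix.one_apply]
      rw [← Finset.univ_product_univ, Finset.sum_product]
      simp only [mul_ite, mul_one, mul_zero, ite_mul, zero_mul]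
      rw [← hrow' p.1, Finset.sum_mul]
      congr 1
      funext j'
      rw [Finset.sum_ite_eq Finset.univ p.2 (fun k => A1 p.1 j' * ((ρ - ρ0) * v0 k))]
      simp
    rw [hC, hD]
    linear_combination (-(v0 p.2)) * key

lemma corona_quadform (n m : ℕ) (A0 : Matrix (Fin n) (Fin n) ℝ)
    (A1 : Matrix (Fin m) (Fin m) ℝ) (b : ℝ) (u : Fin n → ℝ) (w : Fin m × Fin n → ℝ) :
    Sum.elim u w ⬝ᵥ (coronaA n m A0 A1 b) *ᵥ Sum.elim u w
      = u ⬝ᵥ A0 *ᵥ u + 2 * b * (∑ i, u i * ∑ j, w (j, i))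
        + ∑ i, (fun j => w (j, i)) ⬝ᵥ A1 *ᵥ (fun j => w (j, i)) := by
  rw [coronaA, fromBlocks_mulVec]
  simp only [Sum.elim_comp_inl, Sum.elim_comp_inr]
  rw [sumElim_dotProduct_sumElim, dotProduct_add, dotProduct_add]
  have hB : u ⬝ᵥ ((Matrix.of fun (i : Fin n) (p : Fin m × Fin n) => if p.2 = i then b else 0) *ᵥ w)
      = b * ∑ i, u i * ∑ j, w (j, i) := by
    simp only [Matrix.mulVec, dotProduct, Matrix.of_apply]
    rw [Finset.mul_sum]
    refine Finset.sum_congr rfl fun i _ => ?_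
    rw [← Finset.univ_product_univ, Finset.sum_product]
    simp only [ite_mul, zero_mul, Finset.sum_ite_eq', Finset.mem_univ, if_true]
    rw [← Finset.mul_sum]
    ring
  have hC : w ⬝ᵥ ((Matrix.of fun (p : Fin m × Fin n) (i : Fin n) => if p.2 = i then b else 0) *ᵥ u)
      = b * ∑ i, u i * ∑ j, w (j, i) := by
    simp only [Matrix.mulVec, dotProduct, Matrix.of_apply, ite_mul, zero_mul,
      Finset.sum_ite_eq, Finset.mem_univ, if_true]
    rw [← Finset.univ_product_univ, Finset.sum_product, Finset.sum_comm, Finset.mul_sum]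
    refine Finset.sum_congr rfl fun i _ => ?_
    simp only [Finset.mul_sum]
    exact Finset.sum_congr rfl fun j _ => by ring
  have hD : w ⬝ᵥ ((A1 ⊗ₖ (1 : Matrix (Fin n) (Fin n) ℝ)) *ᵥ w)
      = ∑ i, (fun j => w (j, i)) ⬝ᵥ A1 *ᵥ (fun j => w (j, i)) := by
    simp only [Matrix.mulVec, dotProduct, Matrix.kroneckerMap_apply, Matrix.one_apply]
    rw [← Finset.univ_product_univ, Finset.sum_product, Finset.sum_comm]
    refine Finset.sum_congr rfl fun i _ => ?_
    refine Finset.sum_congr rfl fun j _ => ?_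
    congr 1
    rw [Finset.sum_product]
    refine Finset.sum_congr rfl fun j' _ => ?_
    simp [mul_ite, mul_one, mul_zero, ite_mul, zero_mul, Finset.sum_ite_eq]
  rw [hB, hC, hD]
  ring

theorem corona_spectral_radius (n m : ℕ) (A0 : Matrix (Fin n) (Fin n) ℝ) (hA0 : A0.IsSymm)
    (A1 : Matrix (Fin m) (Fin m) ℝ) (hA1 : A1.IsSymm) (ρ0 ρ1 b : ℝ) (hb : 0 < b)
    (h0 : IsGreatest (spectrum ℝ A0) ρ0)
    (hrow : A1.mulVec (fun _ => 1) = fun _ => ρ1)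
    (h1 : IsGreatest (spectrum ℝ A1) ρ1) :
    IsGreatest (spectrum ℝ (coronaA n m A0 A1 b))
      ((ρ0 + ρ1 + Real.sqrt ((ρ0 - ρ1) ^ 2 + 4 * m * b ^ 2)) / 2) := by
  set s : ℝ := Real.sqrt ((ρ0 - ρ1) ^ 2 + 4 * m * b ^ 2) with hs_def
  set ρ : ℝ := (ρ0 + ρ1 + s) / 2 with hρ_def
  have hD0 : (0:ℝ) ≤ (ρ0 - ρ1) ^ 2 + 4 * m * b ^ 2 := by positivity
  have hs2 : s ^ 2 = (ρ0 - ρ1) ^ 2 + 4 * m * b ^ 2 := Real.sq_sqrt hD0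
  have hsabs : |ρ0 - ρ1| ≤ s := by
    rw [hs_def, ← Real.sqrt_sq_eq_abs]
    apply Real.sqrt_le_sqrt
    have : (0:ℝ) ≤ 4 * m * b ^ 2 := by positivity
    linarith
  have hρ0 : ρ0 ≤ ρ := by
    have := le_abs_self (ρ0 - ρ1)
    rw [hρ_def]; linarith
  have hρ1 : ρ1 ≤ ρ := by
    have := neg_abs_le (ρ0 - ρ1)
    rw [hρ_def]; linarith
  have key : (ρ - ρ0) * (ρ - ρ1) = m * b ^ 2 := by
    rw [hρ_def]; linear_combination hs2 / 4
  clear_value s ρ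
  obtain ⟨v0, hv0ne, hv0⟩ := (corona_mem_spectrum_iff_exists A0 ρ0).mp h0.1
  obtain ⟨v1, hv1ne, -⟩ := (corona_mem_spectrum_iff_exists A1 ρ1).mp h1.1
  have hm : 0 < m := by
    rcases Nat.eq_zero_or_pos m with h | h
    · subst h
      exact absurd (funext fun j => j.elim0 : v1 = 0) hv1ne
    · exact h
  constructor
  · -- membership
    rw [corona_mem_spectrum_iff_exists]
    refine ⟨Sum.elim (fun i => (m * b) * v0 i) (fun p => (ρ - ρ0) * v0 p.2), ?_,
      corona_eigen n m A0 A1 b ρ ρ0 ρ1 v0 hv0 hrow key⟩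
    intro hcontr
    obtain ⟨i, hi⟩ := Function.ne_iff.mp hv0ne
    have : (m : ℝ) * b * v0 i = 0 := by
      simpa using congrFun hcontr (Sum.inl i)
    have hmb : (m : ℝ) * b ≠ 0 :=
      mul_ne_zero (Nat.cast_ne_zero.mpr hm.ne') hb.ne'
    exact hi ((mul_eq_zero.mp this).resolve_left hmb)
  · -- upper bound
    intro μ hμ
    obtain ⟨x, hxne, hx⟩ := (corona_mem_spectrum_iff_exists _ μ).mp hμ
    set u : Fin n → ℝ := fun i => x (Sum.inl i) with hu_def
    set w : Fin m × Fin n → ℝ := fun p => x (Sum.inr p) with hw_def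
    have hxe : x = Sum.elim u w := by
      funext p; rcases p with i | p <;> rfl
    set s2 : ℝ := u ⬝ᵥ u with hs2_def
    set t2 : ℝ := w ⬝ᵥ w with ht2_def
    set P : ℝ := ∑ i, u i * ∑ j, w (j, i) with hP_def
    have hs2nn : 0 ≤ s2 := Finset.sum_nonneg fun i _ => mul_self_nonneg _
    have ht2nn : 0 ≤ t2 := Finset.sum_nonneg fun i _ => mul_self_nonneg _
    have hxx : x ⬝ᵥ x = s2 + t2 := by
      rw [hxe, sumElim_dotProduct_sumElim]
    have hQ : μ * (s2 + t2) = x ⬝ᵥ (coronaA n m A0 A1 b) *ᵥ x := by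
      rw [hx, dotProduct_smul, smul_eq_mul, hxx]
    have hQform : x ⬝ᵥ (coronaA n m A0 A1 b) *ᵥ x
        = u ⬝ᵥ A0 *ᵥ u + 2 * b * P
          + ∑ i, (fun j => w (j, i)) ⬝ᵥ A1 *ᵥ (fun j => w (j, i)) := by
      conv_lhs => rw [hxe]
      exact corona_quadform n m A0 A1 b u w
    have hA0q : u ⬝ᵥ A0 *ᵥ u ≤ ρ0 * s2 := corona_quad_le A0 hA0 ρ0 h0.2 u
    have ht2eq : t2 = ∑ i, (fun j => w (j, i)) ⬝ᵥ (fun j => w (j, i)) := by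
      rw [ht2_def]
      simp only [dotProduct]
      rw [← Finset.univ_product_univ, Finset.sum_product, Finset.sum_comm]
    have hA1q : (∑ i, (fun j => w (j, i)) ⬝ᵥ A1 *ᵥ (fun j => w (j, i))) ≤ ρ1 * t2 := by
      rw [ht2eq, Finset.mul_sum]
      exact Finset.sum_le_sum fun i _ => corona_quad_le A1 hA1 ρ1 h1.2 _
    have hP2 : P ^ 2 ≤ m * s2 * t2 := by
      have c1 : P ^ 2 ≤ s2 * ∑ i, (∑ j, w (j, i)) ^ 2 := by
        have h := Finset.sum_mul_sq_le_sq_mul_sq Finset.univ u (fun i => ∑ j, w (j, i))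
        have hs2eq : s2 = ∑ i, u i ^ 2 := by
          rw [hs2_def]; simp [dotProduct, sq]
        rw [hP_def, hs2eq]
        exact h
      have c2 : (∑ i, (∑ j, w (j, i)) ^ 2) ≤ m * t2 := by
        have ht2eq' : t2 = ∑ i, ∑ j, w (j, i) ^ 2 := by
          rw [ht2_def]
          simp only [dotProduct, ← sq]
          rw [← Finset.univ_product_univ, Finset.sum_product, Finset.sum_comm]
        rw [ht2eq', Finset.mul_sum]
        refine Finset.sum_le_sum fun i _ => ?_
        have h := Finset.sum_mul_sq_le_sq_mul_sq Finset.univ (fun _ : Fin m => (1:ℝ))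
          (fun j => w (j, i))
        simpa using h
      calc P ^ 2 ≤ s2 * ∑ i, (∑ j, w (j, i)) ^ 2 := c1
        _ ≤ s2 * (m * t2) := by
            exact mul_le_mul_of_nonneg_left c2 hs2nn
        _ = m * s2 * t2 := by ring
    have hpos : 0 < s2 + t2 := by
      rw [← hxx]
      rcases lt_or_eq_of_le (Finset.sum_nonneg fun p _ => mul_self_nonneg (x p)) with h | h
      · exact h
      · exact absurd (dotProduct_self_eq_zero.mp h.symm) hxne
    clear_value u w s2 t2 P
    have hbP : b ^ 2 * P ^ 2 ≤ b ^ 2 * (m * s2 * t2) :=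
      mul_le_mul_of_nonneg_left hP2 (sq_nonneg b)
    have keyst : ((ρ - ρ0) * (ρ - ρ1)) * (s2 * t2) = (m * b ^ 2) * (s2 * t2) := by
      rw [key]
    have habs : (2 * b * P) ^ 2 ≤ ((ρ - ρ0) * s2 + (ρ - ρ1) * t2) ^ 2 := by
      nlinarith [sq_nonneg ((ρ - ρ0) * s2 - (ρ - ρ1) * t2), hbP, keyst]
    have hrhsnn : 0 ≤ (ρ - ρ0) * s2 + (ρ - ρ1) * t2 :=
      add_nonneg (mul_nonneg (by linarith) hs2nn) (mul_nonneg (by linarith) ht2nn)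
    have hcross : 2 * b * P ≤ (ρ - ρ0) * s2 + (ρ - ρ1) * t2 :=
      corona_sq_le_aux _ _ habs hrhsnn
    have hfinal : μ * (s2 + t2) ≤ ρ * (s2 + t2) := by
      rw [hQ, hQform]
      linarith [hA0q, hA1q, hcross]
    exact le_of_mul_le_mul_right hfinal hpos
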